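/- For all integers w, t, I, and α with t ≥ 0, α ≥ 0, w + α ≥ 0, and I ≥ 1, the recurrence Q(w, t+1, I, α) = Q(w, t, I, α) + Q(w, t, I, α+1) holds. -/

import Mathlib

/-- The generalized binomial coefficient `C(a,b)` for integers `a`, `b`:
`C(a,b) = 0` if `b < 0`, and `C(a,b) = a(a-1)⋯(a-b+1)/b!` if `b ≥ 0`. -/
noncomputable def binom (a b : ℤ) : ℤ := if b < 0 then 0 else Ring.choose a b.toNat

lemma binom_neg {a b : ℤ} (h : b < 0) : binom a b = 0 := if_pos h

lemma binom_natCast (n k : ℕ) : binom (n : ℤ) (k : ℤ) = (n.choose k : ℤ) := by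
  simp [binom, Ring.choose_natCast]

lemma binom_eq_zero {a b : ℤ} (ha : 0 ≤ a) (h : a < b) : binom a b = 0 := by
  rw [show a = ((a.toNat : ℕ) : ℤ) by omega, show b = ((b.toNat : ℕ) : ℤ) by omega, binom_natCast,
    Nat.choose_eq_zero_of_lt (by omega)]
  rfl

lemma binom_congr {a b a' b' : ℤ} (h1 : a = a') (h2 : b = b') : binom a b = binom a' b' := by
  rw [h1, h2]

lemma binom_pascal (a b : ℤ) : binom (a + 1) b = binom a b + binom a (b - 1) := by
  rcases lt_or_ge b 0 with h | h
  · rw [binom_neg h, binom_neg h, binom_neg (by omega)]; ring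
  rcases eq_or_lt_of_le h with h0 | h0
  · rw [← h0]; simp [binom, Ring.choose_zero_right, binom_neg]
  · have hb : b.toNat = (b - 1).toNat + 1 := by omega
    unfold binom
    rw [if_neg (by omega), if_neg (by omega), if_neg (by omega), hb, Ring.choose_succ_succ,
      show (b-1).toNat + 1 = b.toNat by omega]
    ring

/-- trinomial revision -/
lemma binom_trinom (t w α I : ℤ) (ht : 0 ≤ t) (hwα : 0 ≤ w + α) (hI : 1 ≤ I) :
    binom (t + w + α) (w + α) * binom t (I - w - α - 1)
      = binom (I - 1) (w + α) * binom (t + w + α) (I - 1) := by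
  rcases lt_or_ge (I - 1) (w + α) with h | h
  · rw [binom_eq_zero (by omega : (0:ℤ) ≤ I - 1) h, binom_neg (show I - w - α - 1 < 0 by omega)]; ring
  · set n : ℕ := (I - 1).toNat with hn
    set k : ℕ := (w + α).toNat with hk
    have hkn : k ≤ n := by omega
    have key := Ring.choose_smul_choose ((t + w + α : ℤ)) (n := n) (k := k) hkn
    have e1 : binom (t + w + α) (w + α) = Ring.choose ((t + w + α : ℤ)) k := by
      unfold binom; rw [if_neg (by omega)]
    have e2 : binom t (I - w - α - 1) = Ring.choose ((t + w + α : ℤ) - k) (n - k) := by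
      unfold binom; rw [if_neg (by omega)]
      have : ((t + w + α : ℤ) - k) = t := by omega
      rw [this]; congr 1; omega
    have e3 : binom (I - 1) (w + α) = ((n.choose k : ℕ) : ℤ) := by
      rw [show (I - 1 : ℤ) = ((n : ℕ) : ℤ) by omega, show (w + α : ℤ) = ((k : ℕ) : ℤ) by omega,
        binom_natCast]
    have e4 : binom (t + w + α) (I - 1) = Ring.choose ((t + w + α : ℤ)) n := by
      unfold binom; rw [if_neg (by omega)]
    rw [e1, e2, e3, e4, ← key, nsmul_eq_mul]

lemma finsum_Iic_eq_sum (f : ℤ → ℤ) (w L : ℤ) (h : ∀ i, i ≤ w → f i ≠ 0 → L ≤ i) :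
    ∑ᶠ i ∈ Set.Iic w, f i = ∑ i ∈ Finset.Icc L w, f i := by
  apply finsum_mem_eq_sum_of_inter_support_eq
  ext i
  simp only [Set.mem_inter_iff, Set.mem_Iic, Function.mem_support, Finset.coe_Icc, Set.mem_Icc]
  constructor
  · rintro ⟨hi, hfi⟩; exact ⟨⟨h i hi hfi, hi⟩, hfi⟩
  · rintro ⟨⟨_, hi⟩, hfi⟩; exact ⟨hi, hfi⟩

lemma finsum_eq_sum' (f : ℤ → ℤ) (L U : ℤ) (h : ∀ i, f i ≠ 0 → L ≤ i ∧ i ≤ U) :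
    ∑ᶠ i : ℤ, f i = ∑ i ∈ Finset.Icc L U, f i := by
  apply finsum_eq_sum_of_support_subset
  intro i hi
  simp only [Finset.coe_Icc, Set.mem_Icc]
  exact h i hi

lemma telescope (f : ℤ → ℤ) (L w : ℤ) (h : L ≤ w + 1) :
    ∑ i ∈ Finset.Icc L w, (f i - f (i + 1)) = f L - f (w + 1) := by
  have h' : L - 1 ≤ w := by omega
  refine Int.le_induction (m := L - 1)
    (motive := fun m _ => ∑ i ∈ Finset.Icc L m, (f i - f (i + 1)) = f L - f (m + 1)) ?_ ?_ w h'
  · show ∑ i ∈ Finset.Icc L (L - 1), (f i - f (i + 1)) = f L - f (L - 1 + 1)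
    rw [Finset.Icc_eq_empty (by omega), show L - 1 + 1 = L by ring]; simp
  · intro n hn ih
    show ∑ i ∈ Finset.Icc L (n + 1), (f i - f (i + 1)) = f L - f (n + 1 + 1)
    rw [show Finset.Icc L (n + 1) = insert (n + 1) (Finset.Icc L n) by
          ext x; simp only [Finset.mem_Icc, Finset.mem_insert]; omega,
        Finset.sum_insert (by simp only [Finset.mem_Icc]; omega), ih]
    ring

/- term functions -/
noncomputable def aterm (w t I α i : ℤ) : ℤ :=
  binom (I - 1) (w - i) * binom (i + I - w - 2) i * binom t (I - i - α)

noncomputable def bterm (w t I α i : ℤ) : ℤ :=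
  ((i + w + 1 + α).negOnePow : ℤ) * binom (2 * i - w - 2 + t + α) (2 * i - w - 1 + α) *
    binom t (I - i - α)

noncomputable def hfun (w t I α i : ℤ) : ℤ :=
  ((i + w + 1 + α).negOnePow : ℤ) * binom (t + (2 * i - w - 2 + α)) (2 * i - w - 2 + α) *
    binom t (I - i - α)

noncomputable def c0term (w t I i : ℤ) : ℤ :=
  ((i + w).negOnePow : ℤ) * binom (t + i - 1) i * binom t (I - i)

noncomputable def qfun (w t I i : ℤ) : ℤ :=
  ((i + w).negOnePow : ℤ) * binom (t + i - 1) (i - 1) * binom t (I - i)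

noncomputable def cterm (w t I α i : ℤ) : ℤ :=
  ((i + 1).negOnePow : ℤ) * binom (I - 1) (w + i) * binom (t + w + i) (I - α + i)

/- pointwise Pascal identities -/
lemma aterm_pascal (w t I α i : ℤ) :
    aterm w (t + 1) I α i = aterm w t I α i + aterm w t I (α + 1) i := by
  unfold aterm
  rw [binom_pascal t (I - i - α), binom_congr (a := t) rfl (show I - i - α - 1 = I - i - (α + 1) by ring)]
  ring

lemma bterm_pascal (w t I α i : ℤ) :
    bterm w (t + 1) I α i = bterm w t I α i + bterm w t I (α + 1) i
      + (hfun w t I α i - hfun w t I α (i + 1)) := by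
  unfold bterm hfun
  have s1 : ((i + w + 1 + (α + 1)).negOnePow : ℤ) = -((i + w + 1 + α).negOnePow : ℤ) := by
    rw [show i + w + 1 + (α + 1) = (i + w + 1 + α) + 1 by ring, Int.negOnePow_succ, Units.val_neg]
  have s2 : (((i + 1) + w + 1 + α).negOnePow : ℤ) = -((i + w + 1 + α).negOnePow : ℤ) := by
    rw [show (i + 1) + w + 1 + α = (i + w + 1 + α) + 1 by ring, Int.negOnePow_succ, Units.val_neg]
  rw [s1, s2]
  -- atoms
  have e1 : binom (2 * i - w - 2 + (t + 1) + α) (2 * i - w - 1 + α)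
      = binom (2 * i - w - 2 + t + α) (2 * i - w - 1 + α)
        + binom (2 * i - w - 2 + t + α) (2 * i - w - 2 + α) := by
    rw [show 2 * i - w - 2 + (t + 1) + α = (2 * i - w - 2 + t + α) + 1 by ring, binom_pascal]
    rw [binom_congr (a := 2 * i - w - 2 + t + α) rfl (show 2 * i - w - 1 + α - 1 = 2 * i - w - 2 + α by ring)]
  have e2 : binom (t + 1) (I - i - α) = binom t (I - i - α) + binom t (I - i - (α + 1)) := by
    rw [binom_pascal, binom_congr (a := t) rfl (show I - i - α - 1 = I - i - (α + 1) by ring)]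
  have e3 : binom (2 * i - w - 2 + t + (α + 1)) (2 * i - w - 1 + (α + 1))
      = binom (2 * i - w - 1 + t + α) (2 * i - w + α) :=
    binom_congr (by ring) (by ring)
  have e4 : binom (t + (2 * i - w - 2 + α)) (2 * i - w - 2 + α)
      = binom (2 * i - w - 2 + t + α) (2 * i - w - 2 + α) :=
    binom_congr (by ring) rfl
  have e5 : binom (t + (2 * (i + 1) - w - 2 + α)) (2 * (i + 1) - w - 2 + α)
      = binom (2 * i - w - 1 + t + α) (2 * i - w + α)
        + (binom (2 * i - w - 2 + t + α) (2 * i - w - 1 + α)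
          + binom (2 * i - w - 2 + t + α) (2 * i - w - 2 + α)) := by
    have p : binom (2 * i - w - 1 + t + α) (2 * i - w - 1 + α)
        = binom (2 * i - w - 2 + t + α) (2 * i - w - 1 + α)
          + binom (2 * i - w - 2 + t + α) (2 * i - w - 2 + α) := by
      rw [binom_congr (show 2 * i - w - 1 + t + α = (2 * i - w - 2 + t + α) + 1 by ring)
          (rfl : 2 * i - w - 1 + α = 2 * i - w - 1 + α), binom_pascal,
        binom_congr (a := 2 * i - w - 2 + t + α) rfl
          (show 2 * i - w - 1 + α - 1 = 2 * i - w - 2 + α by ring)]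
    rw [binom_congr (show t + (2 * (i + 1) - w - 2 + α) = (2 * i - w - 1 + t + α) + 1 by ring)
        (show 2 * (i + 1) - w - 2 + α = 2 * i - w + α by ring), binom_pascal,
      binom_congr (a := 2 * i - w - 1 + t + α) rfl
        (show 2 * i - w + α - 1 = 2 * i - w - 1 + α by ring), p]
  have e6 : binom t (I - (i + 1) - α) = binom t (I - i - (α + 1)) := binom_congr rfl (by ring)
  rw [e1, e2, e3, e4, e5, e6]
  ring

lemma c0term_pascal (w t I i : ℤ) :
    c0term w (t + 1) I i = c0term w t I i + (qfun w t I i - qfun w t I (i + 1)) := by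
  unfold c0term qfun
  have s2 : (((i + 1) + w).negOnePow : ℤ) = -((i + w).negOnePow : ℤ) := by
    rw [show (i + 1) + w = (i + w) + 1 by ring, Int.negOnePow_succ, Units.val_neg]
  rw [s2]
  have e1 : binom (t + 1 + i - 1) i = binom (t + i - 1) i + binom (t + i - 1) (i - 1) := by
    rw [binom_congr (show t + 1 + i - 1 = (t + i - 1) + 1 by ring) rfl, binom_pascal]
  have e2 : binom (t + 1) (I - i) = binom t (I - i) + binom t (I - i - 1) := binom_pascal t (I - i)
  have e3 : binom (t + (i + 1) - 1) ((i + 1) - 1)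
      = binom (t + i - 1) i + binom (t + i - 1) (i - 1) := by
    rw [binom_congr (show t + (i + 1) - 1 = (t + i - 1) + 1 by ring)
      (show (i + 1) - 1 = i by ring), binom_pascal]
  have e4 : binom t (I - (i + 1)) = binom t (I - i - 1) := binom_congr rfl (by ring)
  rw [e1, e2, e3, e4]
  ring

lemma cterm_pascal (w t I α i : ℤ) :
    cterm w (t + 1) I α i = cterm w t I α i + cterm w t I (α + 1) i := by
  unfold cterm
  have e1 : binom (t + 1 + w + i) (I - α + i)
      = binom (t + w + i) (I - α + i) + binom (t + w + i) (I - (α + 1) + i) := by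
    rw [binom_congr (show t + 1 + w + i = (t + w + i) + 1 by ring) rfl, binom_pascal,
      binom_congr (a := t + w + i) rfl (show I - α + i - 1 = I - (α + 1) + i by ring)]
  rw [e1]
  ring

lemma A_rec (w t I α : ℤ) (hI : 1 ≤ I) :
    (∑ᶠ i : ℤ, aterm w (t + 1) I α i)
      = (∑ᶠ i : ℤ, aterm w t I α i) + (∑ᶠ i : ℤ, aterm w t I (α + 1) i) := by
  have c : ∀ (t' α' : ℤ), ∀ i, aterm w t' I α' i ≠ 0 → w - I + 1 ≤ i ∧ i ≤ w := by
    intro t' α' i hne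
    constructor <;> by_contra hlt <;> push_neg at hlt <;> apply hne <;> unfold aterm
    · rw [binom_eq_zero (show (0:ℤ) ≤ I - 1 by omega) (by omega)]; ring
    · rw [binom_neg (show w - i < 0 by omega)]; ring
  rw [finsum_eq_sum' _ (w - I + 1) w (c (t + 1) α), finsum_eq_sum' _ (w - I + 1) w (c t α),
    finsum_eq_sum' _ (w - I + 1) w (c t (α + 1)), ← Finset.sum_add_distrib]
  exact Finset.sum_congr rfl (fun i _ => aterm_pascal w t I α i)

lemma B_rec (w t I α : ℤ) (ht : 0 ≤ t) :
    (∑ᶠ i ∈ Set.Iic w, bterm w (t + 1) I α i)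
      = (∑ᶠ i ∈ Set.Iic w, bterm w t I α i) + (∑ᶠ i ∈ Set.Iic w, bterm w t I (α + 1) i)
        + ((α + 1).negOnePow : ℤ) * (binom (t + w + α) (w + α) * binom t (I - w - α - 1)) := by
  set L := min (I - α - t - 1) (w + 1) with hLdef
  have hL : L ≤ w + 1 := min_le_right _ _
  have hL2 : L ≤ I - α - t - 1 := min_le_left _ _
  have c1 : ∀ i, i ≤ w → bterm w (t + 1) I α i ≠ 0 → L ≤ i := by
    intro i hi hne; by_contra hlt; push_neg at hlt; apply hne
    unfold bterm; rw [binom_eq_zero (show (0:ℤ) ≤ t + 1 by omega) (by omega)]; ring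
  have c2 : ∀ i, i ≤ w → bterm w t I α i ≠ 0 → L ≤ i := by
    intro i hi hne; by_contra hlt; push_neg at hlt; apply hne
    unfold bterm; rw [binom_eq_zero ht (by omega)]; ring
  have c3 : ∀ i, i ≤ w → bterm w t I (α + 1) i ≠ 0 → L ≤ i := by
    intro i hi hne; by_contra hlt; push_neg at hlt; apply hne
    unfold bterm; rw [binom_eq_zero ht (by omega)]; ring
  rw [finsum_Iic_eq_sum _ w L c1, finsum_Iic_eq_sum _ w L c2, finsum_Iic_eq_sum _ w L c3,
    Finset.sum_congr rfl (fun i _ => bterm_pascal w t I α i), Finset.sum_add_distrib,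
    Finset.sum_add_distrib, telescope _ L w hL]
  have h0 : hfun w t I α L = 0 := by
    unfold hfun; rw [binom_eq_zero ht (show t < I - L - α by omega)]; ring
  have h1 : hfun w t I α (w + 1)
      = (α.negOnePow : ℤ) * (binom (t + w + α) (w + α) * binom t (I - w - α - 1)) := by
    unfold hfun
    rw [show (w + 1) + w + 1 + α = 2 * (w + 1) + α by ring, Int.negOnePow_add,
      Int.negOnePow_two_mul, one_mul,
      binom_congr (show t + (2 * (w + 1) - w - 2 + α) = t + w + α by ring)
        (show 2 * (w + 1) - w - 2 + α = w + α by ring),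
      binom_congr (a := t) rfl (show I - (w + 1) - α = I - w - α - 1 by ring)]
    ring
  have hs : ((α + 1).negOnePow : ℤ) = -(α.negOnePow : ℤ) := by
    rw [Int.negOnePow_succ, Units.val_neg]
  rw [h0, h1, hs]; ring

lemma C0_rec (w t I : ℤ) (ht : 0 ≤ t) :
    (∑ᶠ i ∈ Set.Iic w, c0term w (t + 1) I i)
      = (∑ᶠ i ∈ Set.Iic w, c0term w t I i) + binom (t + w) w * binom t (I - w - 1) := by
  set L := min (I - t - 1) (w + 1) with hLdef
  have hL : L ≤ w + 1 := min_le_right _ _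
  have hL2 : L ≤ I - t - 1 := min_le_left _ _
  have c1 : ∀ i, i ≤ w → c0term w (t + 1) I i ≠ 0 → L ≤ i := by
    intro i hi hne; by_contra hlt; push_neg at hlt; apply hne
    unfold c0term; rw [binom_eq_zero (show (0:ℤ) ≤ t + 1 by omega) (by omega)]; ring
  have c2 : ∀ i, i ≤ w → c0term w t I i ≠ 0 → L ≤ i := by
    intro i hi hne; by_contra hlt; push_neg at hlt; apply hne
    unfold c0term; rw [binom_eq_zero ht (by omega)]; ring
  rw [finsum_Iic_eq_sum _ w L c1, finsum_Iic_eq_sum _ w L c2,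
    Finset.sum_congr rfl (fun i _ => c0term_pascal w t I i), Finset.sum_add_distrib,
    telescope _ L w hL]
  have h0 : qfun w t I L = 0 := by
    unfold qfun; rw [binom_eq_zero ht (show t < I - L by omega)]; ring
  have h1 : qfun w t I (w + 1) = -(binom (t + w) w * binom t (I - w - 1)) := by
    unfold qfun
    rw [show (w + 1) + w = 2 * w + 1 by ring, Int.negOnePow_two_mul_add_one, Units.val_neg,
      Units.val_one,
      binom_congr (show t + (w + 1) - 1 = t + w by ring) (show (w + 1) - 1 = w by ring),
      binom_congr (a := t) rfl (show I - (w + 1) = I - w - 1 by ring)]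
    ring
  rw [h0, h1]; ring

lemma C3_rec (w t I α : ℤ) (hα : 1 ≤ α) :
    (∑ i ∈ Finset.Icc (1:ℤ) (α - 1), cterm w (t + 1) I α i)
      = (∑ i ∈ Finset.Icc (1:ℤ) (α - 1), cterm w t I α i)
        + (∑ i ∈ Finset.Icc (1:ℤ) ((α + 1) - 1), cterm w t I (α + 1) i)
        - ((α + 1).negOnePow : ℤ) * binom (I - 1) (w + α) * binom (t + w + α) (I - 1) := by
  have e : Finset.Icc (1:ℤ) ((α + 1) - 1) = insert α (Finset.Icc (1:ℤ) (α - 1)) := by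
    ext x; simp only [Finset.mem_Icc, Finset.mem_insert]; omega
  rw [e, Finset.sum_insert (by simp only [Finset.mem_Icc]; omega),
    Finset.sum_congr rfl (fun i _ => cterm_pascal w t I α i), Finset.sum_add_distrib]
  have hc : cterm w t I (α + 1) α
      = ((α + 1).negOnePow : ℤ) * binom (I - 1) (w + α) * binom (t + w + α) (I - 1) := by
    unfold cterm
    rw [binom_congr (a := t + w + α) rfl (show I - (α + 1) + α = I - 1 by ring)]
  rw [hc]; ring

/-- The integer `Q(w,t,I,α)` from Definition 3.1 of the paper (intended for `0 ≤ α`). -/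
noncomputable def Q (w t I α : ℤ) : ℤ :=
  if α = 0 then
    -(∑ᶠ i : ℤ, binom (I - 1) (w - i) * binom (i + I - w - 2) i * binom t (I - i))
    + (∑ᶠ i ∈ Set.Iic w,
        ((i + w + 1).negOnePow : ℤ) * binom (2 * i - w - 2 + t) (2 * i - w - 1) * binom t (I - i))
    + (∑ᶠ i ∈ Set.Iic w,
        ((i + w).negOnePow : ℤ) * binom (t + i - 1) i * binom t (I - i))
  else
    -(∑ᶠ i : ℤ, binom (I - 1) (w - i) * binom (i + I - w - 2) i * binom t (I - i - α))
    + (∑ᶠ i ∈ Set.Iic w,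
        ((i + w + 1 + α).negOnePow : ℤ) * binom (2 * i - w - 2 + t + α) (2 * i - w - 1 + α) *
          binom t (I - i - α))
    + (∑ i ∈ Finset.Icc (1 : ℤ) (α - 1),
        ((i + 1).negOnePow : ℤ) * binom (I - 1) (w + i) * binom (t + w + i) (I - α + i))

lemma Q_pos (w t I α : ℤ) (h : α ≠ 0) :
    Q w t I α = -(∑ᶠ i : ℤ, aterm w t I α i) + (∑ᶠ i ∈ Set.Iic w, bterm w t I α i)
      + (∑ i ∈ Finset.Icc (1:ℤ) (α - 1), cterm w t I α i) := by
  unfold Q aterm bterm cterm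
  rw [if_neg h]

lemma Q_zero (w t I : ℤ) :
    Q w t I 0 = -(∑ᶠ i : ℤ, aterm w t I 0 i) + (∑ᶠ i ∈ Set.Iic w, bterm w t I 0 i)
      + (∑ᶠ i ∈ Set.Iic w, c0term w t I i) := by
  unfold Q aterm bterm c0term
  rw [if_pos rfl]
  congr 1
  congr 1
  · congr 1
    exact finsum_congr fun i => by
      rw [binom_congr (a := t) rfl (show I - i - 0 = I - i by ring)]
  · exact finsum_mem_congr rfl fun i _ => by
      rw [show i + w + 1 + 0 = i + w + 1 by ring,
        binom_congr (show 2 * i - w - 2 + t + 0 = 2 * i - w - 2 + t by ring)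
          (show 2 * i - w - 1 + 0 = 2 * i - w - 1 by ring),
        binom_congr (a := t) rfl (show I - i - 0 = I - i by ring)]

theorem Q_recurrence (w t I α : ℤ) (ht : 0 ≤ t) (hα : 0 ≤ α) (hwα : 0 ≤ w + α) (hI : 1 ≤ I) :
    Q w (t + 1) I α = Q w t I α + Q w t I (α + 1) := by
  rcases eq_or_ne α 0 with rfl | h0
  · rw [Q_zero w (t + 1) I, Q_zero w t I, Q_pos w t I (0 + 1) (by norm_num)]
    have hA := A_rec w t I 0 hI
    have hB := B_rec w t I 0 ht
    have hC := C0_rec w t I ht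
    have hE : ((0 + 1 : ℤ).negOnePow : ℤ) * (binom (t + w + 0) (w + 0) * binom t (I - w - 0 - 1))
        = -(binom (t + w) w * binom t (I - w - 1)) := by
      rw [show (0 + 1 : ℤ) = 1 by norm_num, Int.negOnePow_one, Units.val_neg, Units.val_one,
        show t + w + 0 = t + w by ring, show w + (0:ℤ) = w by ring,
        show I - w - 0 - 1 = I - w - 1 by ring]
      ring
    have hCs : (∑ i ∈ Finset.Icc (1:ℤ) (0 + 1 - 1), cterm w t I (0 + 1) i) = 0 := by
      rw [show (0 + 1 - 1 : ℤ) = 0 by norm_num, Finset.Icc_eq_empty (by norm_num),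
        Finset.sum_empty]
    rw [hCs]
    linarith [hA, hB, hC, hE]
  · have h1 : α + 1 ≠ 0 := by omega
    rw [Q_pos w (t + 1) I α h0, Q_pos w t I α h0, Q_pos w t I (α + 1) h1]
    have hA := A_rec w t I α hI
    have hB := B_rec w t I α ht
    have hC := C3_rec w t I α (by omega)
    have hT := binom_trinom t w α I ht hwα hI
    linear_combination -hA + hB + hC + ((α + 1).negOnePow : ℤ) * hT
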